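/- Let r, ρ : ℝ with r > 0, ρ > 0, and let τ, σ ∈ [0,∞) be two time points. Define f(t) = r·t for t < τ and f(t) = r·τ + ρ·(t−τ) for t ≥ τ, and similarly g(t) = r·t for t < σ and g(t) = r·σ + ρ·(t−σ) for t ≥ σ. Then sup over t ≥ 0 of |f(t) − g(t)| ≤ |σ − τ|·(r + ρ). -/
import Mathlib


/-- Deterministic single-rate-switch compatible pasting distance bound:
two piecewise-linear paths switching slope from `r` to `ρ` at times `τ` and `σ`
differ uniformly (over `t ≥ 0`) by at most `|σ - τ| * (r + ρ)`. -/
theorem stmt_0 (r ρ τ σ : ℝ) (hr : 0 < r) (hρ : 0 < ρ)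
    (hτ : 0 ≤ τ) (hσ : 0 ≤ σ)
    (f g : ℝ → ℝ)
    (hf : ∀ t, f t = if t < τ then r * t else r * τ + ρ * (t - τ))
    (hg : ∀ t, g t = if t < σ then r * t else r * σ + ρ * (t - σ)) :
    ∀ t, 0 ≤ t → |f t - g t| ≤ |σ - τ| * (r + ρ) := by
  intro t ht
  rw [hf, hg]
  have h1 := le_abs_self (σ - τ)
  have h2 := neg_abs_le (σ - τ)
  rcases lt_or_ge t τ with hτt | hτt <;> rcases lt_or_ge t σ with hσt | hσt <;>
    simp only [if_pos, if_neg, not_lt, hτt, hσt] <;> rw [abs_le] <;>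
    constructor <;> nlinarith
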